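/- arXiv:1906.06067 — 5 statements merged into one kernel-verified Lean document; each statement's English description precedes it below -/
import Mathlib

section
/- Let x ∈ ℝⁿ, r = b − Ax, and let Φ be an n×m real matrix with linearly independent columns. The infimum of f over the affine subspace {x + Φa : a ∈ ℝᵐ} is strictly smaller than f(x) if and only if Φᵀr ≠ 0; in particular, one coordinate vector φ with φᵀr ≠ 0 suffices for a strict decrease of the energy. -/
open Matrix

/-- With `r = b − Ax` and `Φ` having linearly independent columns, the infimum of `f`
over the affine subspace `{x + Φa}` is strictly smaller than `f x` iff `Φᵀr ≠ 0`;
in particular a single coordinate vector `φ` with `φᵀr ≠ 0` suffices for a strict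
energy decrease. -/
theorem stmt3 (n m : ℕ) (A : Matrix (Fin n) (Fin n) ℝ) (hA : A.PosDef)
    (b : Fin n → ℝ) (f : (Fin n → ℝ) → ℝ)
    (hf : ∀ y, f y = (1 / 2) * (y ⬝ᵥ A.mulVec y) - y ⬝ᵥ b)
    (x : Fin n → ℝ) (r : Fin n → ℝ) (hr : r = b - A.mulVec x)
    (Φ : Matrix (Fin n) (Fin m) ℝ)
    (hΦ : Function.Injective fun a : Fin m → ℝ => Φ.mulVec a) :
    ((∃ a : Fin m → ℝ, f (x + Φ.mulVec a) < f x) ↔ Φᵀ.mulVec r ≠ 0) ∧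
    (∀ φ : Fin n → ℝ, φ ⬝ᵥ r ≠ 0 → ∃ t : ℝ, f (x + t • φ) < f x) := by
  have hT : Aᵀ = A := by
    have := hA.isHermitian
    simpa [Matrix.IsHermitian] using this
  -- quadratic expansion
  have hexp : ∀ d : Fin n → ℝ,
      f (x + d) = f x + (1 / 2) * (d ⬝ᵥ A.mulVec d) - d ⬝ᵥ r := by
    intro d
    have hsym : x ⬝ᵥ A.mulVec d = d ⬝ᵥ A.mulVec x := by
      rw [dotProduct_mulVec, ← mulVec_transpose, hT, dotProduct_comm]
    simp only [hf, hr, mulVec_add, dotProduct_add, add_dotProduct, dotProduct_sub, hsym]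
    ring
  have hpos : ∀ d : Fin n → ℝ, d ≠ 0 → 0 < d ⬝ᵥ A.mulVec d := by
    intro d hd
    simpa using hA.dotProduct_mulVec_pos hd
  have hdec : ∀ d : Fin n → ℝ, d ⬝ᵥ r ≠ 0 → ∃ t : ℝ, f (x + t • d) < f x := by
    intro d hc
    have hd0 : d ≠ 0 := by
      rintro rfl; simp at hc
    set q := d ⬝ᵥ A.mulVec d with hqdef
    set c := d ⬝ᵥ r with hcdef
    have hq : 0 < q := hpos d hd0
    refine ⟨c / q, ?_⟩
    rw [hexp ((c / q) • d)]
    have h1 : (c / q) • d ⬝ᵥ A.mulVec ((c / q) • d) = (c / q) ^ 2 * q := by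
      rw [mulVec_smul, smul_dotProduct, dotProduct_smul]
      simp [← hqdef]; ring
    have h2 : (c / q) • d ⬝ᵥ r = (c / q) * c := by
      rw [smul_dotProduct]; simp [← hcdef]
    rw [h1, h2]
    have h3 : (1 / 2) * ((c / q) ^ 2 * q) - (c / q) * c = -(c ^ 2 / (2 * q)) := by
      field_simp; ring
    have h4 : 0 < c ^ 2 / (2 * q) := by positivity
    rw [sub_eq_add_neg, add_assoc, ← sub_eq_add_neg, h3]
    linarith
  constructor
  · constructor
    · rintro ⟨a, ha⟩ h0
      have hz : Φ.mulVec a ⬝ᵥ r = 0 := by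
        rw [dotProduct_comm, dotProduct_mulVec, ← mulVec_transpose, h0]
        simp
      rw [hexp (Φ.mulVec a), hz] at ha
      rcases eq_or_ne (Φ.mulVec a) 0 with h | h
      · rw [h] at ha; simp at ha
      · have := hpos _ h
        nlinarith
    · intro hne
      set a := Φᵀ.mulVec r with hadef
      have hc : Φ.mulVec a ⬝ᵥ r ≠ 0 := by
        have heq : Φ.mulVec a ⬝ᵥ r = a ⬝ᵥ a := by
          rw [dotProduct_comm, dotProduct_mulVec, ← mulVec_transpose, ← hadef]
        rw [heq]
        intro h
        exact hne (by simpa [hadef] using dotProduct_self_eq_zero.mp h)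
      obtain ⟨t, ht⟩ := hdec _ hc
      exact ⟨t • a, by rw [Φ.mulVec_smul]; exact ht⟩
  · exact hdec
end

section
/- Let x ∈ ℝⁿ, r = b − Ax with r ≠ 0, and let S be any linear subspace of ℝⁿ containing r. If x' minimizes f over the affine subspace x + S, then f(x') ≤ f(x) − (rᵀr)²/(2 rᵀAr) < f(x); that is, every subspace-minimization step whose coordinate vectors include the residual decreases the energy at least as much as the steepest descent step. -/
open Matrix

/-- If the subspace `S` contains the (nonzero) residual `r = b − Ax`, then the
minimizer `x'` of `f` over `x + S` satisfies
`f x' ≤ f x − (rᵀr)²/(2 rᵀAr) < f x`. -/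
theorem stmt8 (n : ℕ) (A : Matrix (Fin n) (Fin n) ℝ) (hA : A.PosDef)
    (b : Fin n → ℝ) (f : (Fin n → ℝ) → ℝ)
    (hf : ∀ y, f y = (1 / 2) * (y ⬝ᵥ A.mulVec y) - y ⬝ᵥ b)
    (x : Fin n → ℝ) (r : Fin n → ℝ) (hr : r = b - A.mulVec x) (hr0 : r ≠ 0)
    (S : Submodule ℝ (Fin n → ℝ)) (hrS : r ∈ S)
    (x' : Fin n → ℝ) (hx' : ∃ s ∈ S, x' = x + s)
    (hmin : ∀ s ∈ S, f x' ≤ f (x + s)) :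
    f x' ≤ f x - (r ⬝ᵥ r) ^ 2 / (2 * (r ⬝ᵥ A.mulVec r)) ∧
    f x - (r ⬝ᵥ r) ^ 2 / (2 * (r ⬝ᵥ A.mulVec r)) < f x := by
  have hrA : 0 < r ⬝ᵥ A.mulVec r := by
    have := hA.dotProduct_mulVec_pos hr0
    simpa using this
  have hrr : 0 < r ⬝ᵥ r := by
    have : r ⬝ᵥ r ≠ 0 := fun h => hr0 (by
      have := (dotProduct_self_eq_zero (v := r)).mp h
      exact this)
    have hnn : 0 ≤ r ⬝ᵥ r :=
      Finset.sum_nonneg fun i _ => mul_self_nonneg _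
    exact lt_of_le_of_ne hnn (Ne.symm this)
  have hsym : ∀ u v : Fin n → ℝ, u ⬝ᵥ A.mulVec v = v ⬝ᵥ A.mulVec u := by
    intro u v
    rw [dotProduct_mulVec, dotProduct_comm, ← mulVec_transpose]
    congr 1
    have h : Aᵀ = A := by
      have := hA.isHermitian.eq
      simpa [conjTranspose_eq_transpose_of_trivial] using this
    rw [h]
  set t : ℝ := (r ⬝ᵥ r) / (r ⬝ᵥ A.mulVec r) with ht
  have hmem : t • r ∈ S := S.smul_mem t hrS
  have hexp : f (x + t • r) = f x - (r ⬝ᵥ r) ^ 2 / (2 * (r ⬝ᵥ A.mulVec r)) := by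
    rw [hf, hf]
    have hsr : (t • r) ⬝ᵥ A.mulVec x = (t • r) ⬝ᵥ b - t * (r ⬝ᵥ r) := by
      have : A.mulVec x = b - r := by rw [hr]; abel
      rw [this]
      simp [dotProduct_sub, smul_dotProduct, mul_comm]
    have hx2 : x ⬝ᵥ A.mulVec (t • r) = (t • r) ⬝ᵥ A.mulVec x := hsym x (t • r)
    rw [add_dotProduct, mulVec_add, dotProduct_add, dotProduct_add, hx2, hsr,
      add_dotProduct]
    simp only [mulVec_smul, smul_dotProduct, dotProduct_smul, smul_eq_mul]
    rw [ht]
    field_simp [ht]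
    ring
  refine ⟨le_trans (hmin _ hmem) (le_of_eq hexp), ?_⟩
  have : 0 < (r ⬝ᵥ r) ^ 2 / (2 * (r ⬝ᵥ A.mulVec r)) :=
    div_pos (pow_pos hrr 2) (by linarith)
  linarith
end

section
/- Let x₀ ∈ ℝⁿ, r₀ = b − Ax₀, and let m be the number of distinct active eigenvalues of r₀ (distinct eigenvalues λⱼ of A such that r₀ has nonzero component along the corresponding orthonormal eigenvector). Then the unique minimizer of f over the affine Krylov subspace x₀ + span{r₀, Ar₀, …, A^{m−1}r₀} is exactly x* = A⁻¹b; hence any method that minimizes f over this Krylov subspace (in exact arithmetic) obtains the exact solution after m steps. -/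
open Matrix Polynomial

/-- Finite termination of energy minimization over Krylov subspaces: if `m` is the
number of distinct active eigenvalues of the initial residual `r₀ = b − Ax₀`, then
the unique minimizer of `f` over the affine Krylov subspace
`x₀ + span{r₀, Ar₀, …, A^{m−1}r₀}` is exactly `x⋆ = A⁻¹b`. -/
theorem stmt13 (n : ℕ) (A : Matrix (Fin n) (Fin n) ℝ) (hA : A.PosDef)
    (b : Fin n → ℝ) (f : (Fin n → ℝ) → ℝ)
    (hf : ∀ y, f y = (1 / 2) * (y ⬝ᵥ A.mulVec y) - y ⬝ᵥ b)
    (v : Fin n → Fin n → ℝ) (μ : Fin n → ℝ)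
    (horth : ∀ i j : Fin n, v i ⬝ᵥ v j = if i = j then (1 : ℝ) else 0)
    (heig : ∀ j : Fin n, A.mulVec (v j) = μ j • v j)
    (x₀ : Fin n → ℝ) (r₀ : Fin n → ℝ) (hr₀ : r₀ = b - A.mulVec x₀)
    (m : ℕ) (hm : m = (μ '' {j : Fin n | r₀ ⬝ᵥ v j ≠ 0}).ncard)
    (K : Submodule ℝ (Fin n → ℝ))
    (hK : K = Submodule.span ℝ (Set.range fun k : Fin m => (A ^ (k : ℕ)).mulVec r₀)) :
    (∃ s ∈ K, A⁻¹.mulVec b = x₀ + s) ∧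
    (∀ s ∈ K, x₀ + s ≠ A⁻¹.mulVec b → f (A⁻¹.mulVec b) < f (x₀ + s)) := by
  classical
  have hdet : IsUnit A.det := isUnit_iff_ne_zero.mpr hA.det_pos.ne'
  have hAinv : A⁻¹ * A = 1 := A.nonsing_inv_mul hdet
  have hAinv' : A * A⁻¹ = 1 := A.mul_nonsing_inv hdet
  -- positivity of the quadratic form
  have hquad : ∀ d : Fin n → ℝ, d ≠ 0 → 0 < d ⬝ᵥ A.mulVec d := by
    intro d hd
    have := hA.dotProduct_mulVec_pos hd
    simpa using this
  -- eigenvalues are positive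
  have hμpos : ∀ j, (0 : ℝ) < μ j := by
    intro j
    have hvne : v j ≠ 0 := by
      intro h
      have := horth j j
      simp [h] at this
    have h1 := hquad (v j) hvne
    rw [heig j, dotProduct_smul, horth j j] at h1
    simpa using h1
  -- symmetry of the bilinear form
  have hAt : Aᵀ = A := by
    have h : Aᴴ = A := hA.1
    rwa [Matrix.conjTranspose_eq_transpose_of_trivial] at h
  have hsym : ∀ a c : Fin n → ℝ, a ⬝ᵥ A.mulVec c = c ⬝ᵥ A.mulVec a := by
    intro a c
    rw [Matrix.dotProduct_mulVec, ← Matrix.mulVec_transpose, hAt, dotProduct_comm]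
  -- orthonormal expansion of r₀
  set V : Matrix (Fin n) (Fin n) ℝ := Matrix.of v with hV
  have hVVt : V * Vᵀ = 1 := by
    ext i j
    have h : ∑ k, v i k * v j k = if i = j then (1 : ℝ) else 0 := by
      simpa [dotProduct] using horth i j
    simp [Matrix.mul_apply, Matrix.one_apply, hV, h]
  have hVtV : Vᵀ * V = 1 := mul_eq_one_comm.mp hVVt
  have hdec : r₀ = ∑ j, (r₀ ⬝ᵥ v j) • v j := by
    have h1 : Vᵀ *ᵥ (V *ᵥ r₀) = r₀ := by
      rw [Matrix.mulVec_mulVec, hVtV, Matrix.one_mulVec]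
    conv_lhs => rw [← h1]
    ext k
    simp only [Matrix.mulVec, dotProduct, Matrix.transpose_apply, Matrix.of_apply,
      Finset.sum_apply, Pi.smul_apply, smul_eq_mul, hV]
    refine Finset.sum_congr rfl fun j _ => ?_
    rw [Finset.mul_sum, Finset.sum_mul]
    refine Finset.sum_congr rfl fun i _ => ?_
    ring
  -- powers of A on eigenvectors
  have hpow : ∀ (k : ℕ) (j : Fin n), (A ^ k) *ᵥ v j = (μ j ^ k) • v j := by
    intro k j
    induction k with
    | zero => simp
    | succ k ih =>
      rw [pow_succ', ← Matrix.mulVec_mulVec, ih, Matrix.mulVec_smul, heig j,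
        smul_smul, ← pow_succ]
  -- polynomials of A on eigenvectors
  have haevalv : ∀ (q : ℝ[X]) (j : Fin n),
      (Polynomial.aeval A q) *ᵥ v j = q.eval (μ j) • v j := by
    intro q j
    induction q using Polynomial.induction_on' with
    | add p q hp hq => simp [Matrix.add_mulVec, hp, hq, add_smul]
    | monomial k a =>
      rw [Polynomial.aeval_monomial, Polynomial.eval_monomial, ← Matrix.mulVec_mulVec,
        hpow, Algebra.algebraMap_eq_smul_one, Matrix.smul_mulVec,
        Matrix.one_mulVec, smul_smul]
  -- polynomials of A on r₀
  have haevalr : ∀ q : ℝ[X],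
      (Polynomial.aeval A q) *ᵥ r₀ = ∑ j, (r₀ ⬝ᵥ v j) • (q.eval (μ j) • v j) := by
    intro q
    conv_lhs => rw [hdec]
    rw [← Matrix.mulVecLin_apply, map_sum]
    simp [Matrix.mulVecLin_apply, haevalv]
  -- the interpolation polynomial
  have hfin : (μ '' {j : Fin n | r₀ ⬝ᵥ v j ≠ 0}).Finite := (Set.toFinite _).image μ
  set S : Finset ℝ := hfin.toFinset with hS
  have hScard : S.card = m := by
    rw [hm, Set.ncard_eq_toFinset_card _ hfin]
  set p : ℝ[X] := Lagrange.interpolate S id (fun t => t⁻¹) with hp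
  have hSmem : ∀ j, r₀ ⬝ᵥ v j ≠ 0 → μ j ∈ S := by
    intro j hj
    rw [hS, Set.Finite.mem_toFinset]
    exact ⟨j, hj, rfl⟩
  have hpeval : ∀ j, r₀ ⬝ᵥ v j ≠ 0 → p.eval (μ j) = (μ j)⁻¹ := by
    intro j hj
    exact Lagrange.eval_interpolate_at_node (fun t => t⁻¹) (Set.injOn_id _) (hSmem j hj)
  set q : ℝ[X] := X * p - 1 with hq
  have hqeval : ∀ j, r₀ ⬝ᵥ v j ≠ 0 → q.eval (μ j) = 0 := by
    intro j hj
    simp [hq, hpeval j hj, mul_inv_cancel₀ (hμpos j).ne']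
  have hker : (Polynomial.aeval A q) *ᵥ r₀ = 0 := by
    rw [haevalr]
    apply Finset.sum_eq_zero
    intro j _
    by_cases hj : r₀ ⬝ᵥ v j = 0
    · simp [hj]
    · simp [hqeval j hj]
  set e : Fin n → ℝ := (Polynomial.aeval A p) *ᵥ r₀ with he_def
  have hAe : A *ᵥ e = r₀ := by
    have h1 : Polynomial.aeval A q = A * Polynomial.aeval A p - 1 := by
      simp [hq]
    rw [h1, Matrix.sub_mulVec, Matrix.one_mulVec, sub_eq_zero] at hker
    rw [he_def, Matrix.mulVec_mulVec]
    exact hker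
  -- membership of e in K
  have he : e ∈ K := by
    rw [he_def]
    by_cases hp0 : p = 0
    · simp [hp0]
    · have hdeg : p.natDegree < m := by
        have h1 : p.degree < S.card := Lagrange.degree_interpolate_lt _ (Set.injOn_id _)
        rw [hScard] at h1
        exact (Polynomial.natDegree_lt_iff_degree_lt hp0).mpr h1
      rw [Polynomial.aeval_eq_sum_range' hdeg]
      have hsum : (∑ i ∈ Finset.range m, p.coeff i • A ^ i) *ᵥ r₀
          = ∑ i ∈ Finset.range m, p.coeff i • ((A ^ i) *ᵥ r₀) := by
        ext k
        simp [Matrix.mulVec, dotProduct, Finset.sum_apply, Matrix.sum_apply,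
          Finset.sum_mul, Matrix.smul_apply, smul_eq_mul, mul_assoc]
        rw [Finset.sum_comm]
        simp [Finset.mul_sum]
      rw [hsum]
      apply Submodule.sum_mem
      intro i hi
      apply Submodule.smul_mem
      rw [hK]
      exact Submodule.subset_span ⟨⟨i, Finset.mem_range.mp hi⟩, rfl⟩
  -- the exact solution
  have hxstar : A⁻¹ *ᵥ b = x₀ + e := by
    have h2 : A⁻¹ *ᵥ (A *ᵥ e) = e := by
      rw [Matrix.mulVec_mulVec, hAinv, Matrix.one_mulVec]
    rw [hAe, hr₀, Matrix.mulVec_sub, Matrix.mulVec_mulVec, hAinv, Matrix.one_mulVec] at h2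
    rw [← h2]
    abel
  set xs : Fin n → ℝ := A⁻¹ *ᵥ b with hxs
  have hbx : A *ᵥ xs = b := by
    rw [hxs, Matrix.mulVec_mulVec, hAinv', Matrix.one_mulVec]
  refine ⟨⟨e, he, hxstar⟩, ?_⟩
  intro s hs hne
  set d : Fin n → ℝ := (x₀ + s) - xs with hd_def
  have hd : d ≠ 0 := sub_ne_zero.mpr hne
  have key : f (x₀ + s) = f xs + 1 / 2 * (d ⬝ᵥ A *ᵥ d) := by
    have hx : x₀ + s = xs + d := by rw [hd_def]; abel
    rw [hf, hf, hx, ← hbx]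
    have h1 : xs ⬝ᵥ A *ᵥ d = d ⬝ᵥ A *ᵥ xs := hsym _ _
    simp only [Matrix.mulVec_add, dotProduct_add, add_dotProduct]
    rw [h1]
    ring
  have := hquad d hd
  rw [key]
  linarith
end

section
/- Define the conjugate gradient iteration: x₀ ∈ ℝⁿ, r₀ = b − Ax₀, p₀ = r₀, and for k ≥ 0 with rₖ ≠ 0: αₖ = (rₖᵀrₖ)/(pₖᵀApₖ), x_{k+1} = xₖ + αₖpₖ, r_{k+1} = rₖ − αₖApₖ, β_{k} = (r_{k+1}ᵀr_{k+1})/(rₖᵀrₖ), p_{k+1} = r_{k+1} + βₖpₖ. Then for every k ≥ 1 with r₀, …, rₖ all nonzero, the CG iterate x_{k+1} is the unique minimizer of f over the two-dimensional affine plane xₖ + span{rₖ, p_{k−1}}; i.e., each CG step coincides with the IRM-CG step that minimizes the energy in the plane spanned by the current residual and the previous search direction. -/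
open Matrix

/-- Each CG step coincides with the IRM-CG step: for `k ≥ 1` (with all residuals
`r₀, …, r_k` nonzero) the CG iterate `x_{k+1}` is the unique minimizer of the energy
`f` over the affine plane `x_k + span{r_k, p_{k−1}}` spanned by the current residual
and the previous search direction. -/
theorem stmt15 (n : ℕ) (A : Matrix (Fin n) (Fin n) ℝ) (hA : A.PosDef)
    (b : Fin n → ℝ) (f : (Fin n → ℝ) → ℝ)
    (hf : ∀ y, f y = (1 / 2) * (y ⬝ᵥ A.mulVec y) - y ⬝ᵥ b)
    (x r p : ℕ → Fin n → ℝ)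
    (hr0 : r 0 = b - A.mulVec (x 0)) (hp0 : p 0 = r 0)
    (hxrec : ∀ k : ℕ, r k ≠ 0 →
      x (k + 1) = x k + ((r k ⬝ᵥ r k) / (p k ⬝ᵥ A.mulVec (p k))) • p k)
    (hrrec : ∀ k : ℕ, r k ≠ 0 →
      r (k + 1) = r k - ((r k ⬝ᵥ r k) / (p k ⬝ᵥ A.mulVec (p k))) • A.mulVec (p k))
    (hprec : ∀ k : ℕ, r k ≠ 0 →
      p (k + 1) = r (k + 1) + ((r (k + 1) ⬝ᵥ r (k + 1)) / (r k ⬝ᵥ r k)) • p k) :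
    ∀ k : ℕ, 1 ≤ k → (∀ i ≤ k, r i ≠ 0) →
      (∃ s ∈ Submodule.span ℝ {r k, p (k - 1)}, x (k + 1) = x k + s) ∧
      (∀ s ∈ Submodule.span ℝ {r k, p (k - 1)},
        x k + s ≠ x (k + 1) → f (x (k + 1)) < f (x k + s)) := by
  have hpos : ∀ v : Fin n → ℝ, v ≠ 0 → 0 < v ⬝ᵥ A.mulVec v := by
    intro v hv; simpa using hA.dotProduct_mulVec_pos hv
  have hAt : Aᵀ = A := by rw [← A.conjTranspose_eq_transpose_of_trivial]; exact hA.1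
  have hsym : ∀ u v : Fin n → ℝ, u ⬝ᵥ A.mulVec v = v ⬝ᵥ A.mulVec u := by
    intro u v; rw [dotProduct_mulVec, ← mulVec_transpose, hAt, dotProduct_comm]
  -- residual identity
  have hres : ∀ j : ℕ, (∀ i < j, r i ≠ 0) → r j = b - A.mulVec (x j) := by
    intro j
    induction j with
    | zero => intro _; exact hr0
    | succ j ih =>
      intro h
      have hj : r j ≠ 0 := h j (Nat.lt_succ_self j)
      have ihj := ih (fun i hi => h i (hi.trans (Nat.lt_succ_self j)))
      rw [hrrec j hj, hxrec j hj, mulVec_add, mulVec_smul, ihj]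
      abel
  -- nonzero self-dot
  have hrr : ∀ j : ℕ, r j ≠ 0 → 0 < r j ⬝ᵥ r j := by
    intro j hj
    have h0 : 0 ≤ r j ⬝ᵥ r j := by simpa using dotProduct_self_star_nonneg (r j)
    rcases lt_or_eq_of_le h0 with h | h
    · exact h
    · exact absurd (dotProduct_self_eq_zero.mp h.symm) hj
  -- main CG invariants, by induction
  -- p j ≠ 0 when r j ≠ 0
  have hpne : ∀ j : ℕ, r j ≠ 0 → r j ⬝ᵥ p j = r j ⬝ᵥ r j → p j ≠ 0 := by
    intro j hj h1 h0
    rw [h0, dotProduct_zero] at h1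
    exact (hrr j hj).ne h1
  -- step lemma for r(j+1) ⟂ p j
  have stepH2 : ∀ j : ℕ, r j ≠ 0 → r j ⬝ᵥ p j = r j ⬝ᵥ r j → r (j + 1) ⬝ᵥ p j = 0 := by
    intro j hj h1
    have hc : 0 < p j ⬝ᵥ A.mulVec (p j) := hpos _ (hpne j hj h1)
    rw [hrrec j hj, sub_dotProduct, smul_dotProduct, smul_eq_mul,
      dotProduct_comm (A.mulVec (p j)) (p j), h1]
    field_simp
    ring
  -- step lemma for conjugacy
  have stepH4 : ∀ j : ℕ, r j ≠ 0 → r j ⬝ᵥ p j = r j ⬝ᵥ r j → r (j + 1) ⬝ᵥ p j = 0 →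
      r (j + 1) ⬝ᵥ r j = 0 → p (j + 1) ⬝ᵥ A.mulVec (p j) = 0 := by
    intro j hj h1 h2 h3
    have ha : 0 < r j ⬝ᵥ r j := hrr j hj
    have hc : 0 < p j ⬝ᵥ A.mulVec (p j) := hpos _ (hpne j hj h1)
    -- transfer: (a/c) * (v ⬝ᵥ A p j) = v ⬝ᵥ r j - v ⬝ᵥ r (j+1)
    have hAp : ∀ v : Fin n → ℝ,
        ((r j ⬝ᵥ r j) / (p j ⬝ᵥ A.mulVec (p j))) * (v ⬝ᵥ A.mulVec (p j)) =
          v ⬝ᵥ r j - v ⬝ᵥ r (j + 1) := by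
      intro v
      have := congrArg (fun w => v ⬝ᵥ w) (hrrec j hj)
      simp only [dotProduct_sub, dotProduct_smul, smul_eq_mul] at this
      linarith
    have e1 := hAp (r (j + 1))
    rw [h3] at e1
    have e2 := hAp (p j)
    rw [dotProduct_comm (p j) (r j), h1, dotProduct_comm (p j) (r (j + 1)), h2] at e2
    rw [hprec j hj, add_dotProduct, smul_dotProduct, smul_eq_mul]
    have hcne : (p j ⬝ᵥ A.mulVec (p j)) ≠ 0 := hc.ne'
    have hane : (r j ⬝ᵥ r j) ≠ 0 := ha.ne'
    field_simp at e1 e2 ⊢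
    nlinarith [e1, e2]
  have key : ∀ k : ℕ, (∀ i ≤ k, r i ≠ 0) →
      (r k ⬝ᵥ p k = r k ⬝ᵥ r k) ∧ (r (k + 1) ⬝ᵥ p k = 0) ∧
      (r (k + 1) ⬝ᵥ r k = 0) ∧ (p (k + 1) ⬝ᵥ A.mulVec (p k) = 0) := by
    intro k
    induction k with
    | zero =>
      intro h
      have h0 := h 0 le_rfl
      have H1 : r 0 ⬝ᵥ p 0 = r 0 ⬝ᵥ r 0 := by rw [hp0]
      have H2 := stepH2 0 h0 H1
      have H3 : r 1 ⬝ᵥ r 0 = 0 := by rw [← hp0]; exact H2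
      exact ⟨H1, H2, H3, stepH4 0 h0 H1 H2 H3⟩
    | succ k ih =>
      intro h
      obtain ⟨H1, H2, H3, H4⟩ := ih (fun i hi => h i (hi.trans (Nat.le_succ k)))
      have hk : r k ≠ 0 := h k (Nat.le_succ k)
      have hk1 : r (k + 1) ≠ 0 := h (k + 1) le_rfl
      -- H1 at k+1
      have H1' : r (k + 1) ⬝ᵥ p (k + 1) = r (k + 1) ⬝ᵥ r (k + 1) := by
        have hq := congrArg (fun v => r (k + 1) ⬝ᵥ v) (hprec k hk)
        simp only [dotProduct_add, dotProduct_smul, smul_eq_mul] at hq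
        rw [H2, mul_zero, add_zero] at hq
        exact hq
      have H2' := stepH2 (k + 1) hk1 H1'
      -- H3 at k+1
      have H3' : r (k + 2) ⬝ᵥ r (k + 1) = 0 := by
        have hp1 : p (k + 1) ≠ 0 := hpne (k + 1) hk1 H1'
        have hc1 : 0 < p (k + 1) ⬝ᵥ A.mulVec (p (k + 1)) := hpos _ hp1
        have hq2 := congrArg (fun v => v ⬝ᵥ A.mulVec (p (k + 1))) (hprec k hk)
        simp only [add_dotProduct, smul_dotProduct, smul_eq_mul] at hq2
        rw [hsym (p k) (p (k + 1)), H4, mul_zero, add_zero] at hq2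
        rw [hrrec (k + 1) hk1, sub_dotProduct, smul_dotProduct, smul_eq_mul,
          dotProduct_comm (A.mulVec (p (k + 1))) (r (k + 1)), ← hq2]
        field_simp
        ring
      exact ⟨H1', H2', H3', stepH4 (k + 1) hk1 H1' H2' H3'⟩
  -- main statement
  intro k hk1 h
  obtain ⟨m, rfl⟩ : ∃ m, k = m + 1 := ⟨k - 1, (Nat.succ_pred_eq_of_pos hk1).symm⟩
  simp only [Nat.add_sub_cancel]
  have hm : ∀ i ≤ m, r i ≠ 0 := fun i hi => h i (hi.trans (Nat.le_succ m))
  obtain ⟨H1m, H2m, H3m, H4m⟩ := key m hm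
  obtain ⟨H1, H2, H3, H4⟩ := key (m + 1) h
  have hk : r (m + 1) ≠ 0 := h _ le_rfl
  have hmne : r m ≠ 0 := hm m le_rfl
  have hx : x (m + 1 + 1) = x (m + 1) +
      ((r (m + 1) ⬝ᵥ r (m + 1)) / (p (m + 1) ⬝ᵥ A.mulVec (p (m + 1)))) • p (m + 1) :=
    hxrec (m + 1) hk
  have hpmem : p (m + 1) ∈ Submodule.span ℝ {r (m + 1), p m} := by
    apply Submodule.mem_span_pair.mpr
    exact ⟨1, (r (m + 1) ⬝ᵥ r (m + 1)) / (r m ⬝ᵥ r m), by rw [hprec m hmne, one_smul]⟩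
  -- orthogonality of new residual to the plane
  have horth : ∀ s ∈ Submodule.span ℝ {r (m + 1), p m}, s ⬝ᵥ r (m + 1 + 1) = 0 := by
    intro s hs
    obtain ⟨c, d, rfl⟩ := Submodule.mem_span_pair.mp hs
    have h2 : r (m + 1 + 1) ⬝ᵥ p m = 0 := by
      rw [hrrec (m + 1) hk, sub_dotProduct, smul_dotProduct, smul_eq_mul,
        dotProduct_comm (A.mulVec (p (m + 1))) (p m), hsym (p m) (p (m + 1)), H4m, H2m]
      ring
    rw [add_dotProduct, smul_dotProduct, smul_dotProduct, smul_eq_mul, smul_eq_mul,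
      dotProduct_comm (r (m + 1)) (r (m + 1 + 1)), dotProduct_comm (p m) (r (m + 1 + 1)),
      H3, h2]
    ring
  -- energy expansion
  have hres2 : r (m + 1 + 1) = b - A.mulVec (x (m + 1 + 1)) :=
    hres (m + 1 + 1) (fun i hi => h i (Nat.lt_succ_iff.mp hi))
  have hexp : ∀ d : Fin n → ℝ, f (x (m + 1 + 1) + d) =
      f (x (m + 1 + 1)) + (1 / 2) * (d ⬝ᵥ A.mulVec d) - d ⬝ᵥ r (m + 1 + 1) := by
    intro d
    rw [hf, hf, hres2]
    simp only [mulVec_add, dotProduct_add, add_dotProduct, dotProduct_sub]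
    rw [hsym (x (m + 1 + 1)) d]
    ring
  refine ⟨⟨_, Submodule.smul_mem _ _ hpmem, hx⟩, ?_⟩
  intro s hs hne
  set al := (r (m + 1) ⬝ᵥ r (m + 1)) / (p (m + 1) ⬝ᵥ A.mulVec (p (m + 1))) with hal
  have hd : x (m + 1) + s = x (m + 1 + 1) + (s - al • p (m + 1)) := by
    rw [hx]; abel
  have hdmem : s - al • p (m + 1) ∈ Submodule.span ℝ {r (m + 1), p m} :=
    Submodule.sub_mem _ hs (Submodule.smul_mem _ _ hpmem)
  have hdne : s - al • p (m + 1) ≠ 0 := by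
    intro h0
    apply hne
    rw [hd, h0, add_zero]
  have hq := hexp (s - al • p (m + 1))
  rw [horth _ hdmem] at hq
  rw [hd, hq]
  have := hpos _ hdne
  linarith
end

section
/- Define the conjugate gradient iteration: x₀ ∈ ℝⁿ, r₀ = b − Ax₀, p₀ = r₀, and for k ≥ 0 with rₖ ≠ 0: αₖ = (rₖᵀrₖ)/(pₖᵀApₖ), x_{k+1} = xₖ + αₖpₖ, r_{k+1} = rₖ − αₖApₖ, βₖ = (r_{k+1}ᵀr_{k+1})/(rₖᵀrₖ), p_{k+1} = r_{k+1} + βₖpₖ. Then for every k ≥ 1 with r₀, …, r_{k−1} all nonzero, the iterate xₖ is the unique minimizer of f over the affine Krylov subspace x₀ + span{r₀, Ar₀, …, A^{k−1}r₀}. -/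
open Matrix

/-- CG optimality over Krylov subspaces: for `k ≥ 1` (with residuals
`r₀, …, r_{k−1}` nonzero) the CG iterate `x_k` is the unique minimizer of the energy
`f` over the affine Krylov subspace `x₀ + span{r₀, Ar₀, …, A^{k−1}r₀}`. -/
theorem stmt16 (n : ℕ) (A : Matrix (Fin n) (Fin n) ℝ) (hA : A.PosDef)
    (b : Fin n → ℝ) (f : (Fin n → ℝ) → ℝ)
    (hf : ∀ y, f y = (1 / 2) * (y ⬝ᵥ A.mulVec y) - y ⬝ᵥ b)
    (x r p : ℕ → Fin n → ℝ)
    (hr0 : r 0 = b - A.mulVec (x 0)) (hp0 : p 0 = r 0)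
    (hxrec : ∀ k : ℕ, r k ≠ 0 →
      x (k + 1) = x k + ((r k ⬝ᵥ r k) / (p k ⬝ᵥ A.mulVec (p k))) • p k)
    (hrrec : ∀ k : ℕ, r k ≠ 0 →
      r (k + 1) = r k - ((r k ⬝ᵥ r k) / (p k ⬝ᵥ A.mulVec (p k))) • A.mulVec (p k))
    (hprec : ∀ k : ℕ, r k ≠ 0 →
      p (k + 1) = r (k + 1) + ((r (k + 1) ⬝ᵥ r (k + 1)) / (r k ⬝ᵥ r k)) • p k) :
    ∀ k : ℕ, 1 ≤ k → (∀ i < k, r i ≠ 0) →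
      (∃ s ∈ Submodule.span ℝ (Set.range fun i : Fin k => (A ^ (i : ℕ)).mulVec (r 0)),
        x k = x 0 + s) ∧
      (∀ s ∈ Submodule.span ℝ (Set.range fun i : Fin k => (A ^ (i : ℕ)).mulVec (r 0)),
        x 0 + s ≠ x k → f (x k) < f (x 0 + s)) := by
  -- abbreviations
  set K : ℕ → Submodule ℝ (Fin n → ℝ) :=
    fun k => Submodule.span ℝ (Set.range fun i : Fin k => (A ^ (i : ℕ)).mulVec (r 0)) with hKdef
  set P : ℕ → Submodule ℝ (Fin n → ℝ) :=
    fun k => Submodule.span ℝ (Set.range fun i : Fin k => p i) with hPdef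
  -- basic linear algebra helpers
  have hpos : ∀ v : Fin n → ℝ, v ≠ 0 → 0 < v ⬝ᵥ A.mulVec v := by
    intro v hv; have := hA.dotProduct_mulVec_pos hv; simpa using this
  have hsym : ∀ u v : Fin n → ℝ, u ⬝ᵥ A.mulVec v = A.mulVec u ⬝ᵥ v := by
    intro u v
    rw [dotProduct_mulVec, ← Matrix.mulVec_transpose]
    have h : Aᵀ = A := by
      have := hA.1
      simpa [Matrix.IsHermitian, Matrix.conjTranspose_eq_transpose_of_trivial] using this
    rw [h]
  have hdspan : ∀ (c : Fin n → ℝ) (s : Set (Fin n → ℝ)), (∀ v ∈ s, c ⬝ᵥ v = 0) →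
      ∀ v ∈ Submodule.span ℝ s, c ⬝ᵥ v = 0 := by
    intro c s hs v hv
    induction hv using Submodule.span_induction with
    | mem w hw => exact hs w hw
    | zero => simp
    | add u w _ _ hu hw => simp [dotProduct_add, hu, hw]
    | smul a u _ hu => simp [dotProduct_smul, hu]
  have hmapspan : ∀ (s : Set (Fin n → ℝ)) (T : Submodule ℝ (Fin n → ℝ)),
      (∀ v ∈ s, A.mulVec v ∈ T) → ∀ v ∈ Submodule.span ℝ s, A.mulVec v ∈ T := by
    intro s T hs v hv
    induction hv using Submodule.span_induction with
    | mem w hw => exact hs w hw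
    | zero => simp [Matrix.mulVec_zero]
    | add u w _ _ hu hw => rw [Matrix.mulVec_add]; exact T.add_mem hu hw
    | smul a u _ hu => rw [Matrix.mulVec_smul]; exact T.smul_mem a hu
  have hPle : ∀ {a c : ℕ}, a ≤ c → P a ≤ P c := by
    intro a c hac
    apply Submodule.span_mono
    rintro _ ⟨i, rfl⟩
    exact ⟨⟨(i : ℕ), lt_of_lt_of_le i.2 hac⟩, rfl⟩
  have hKle : ∀ {a c : ℕ}, a ≤ c → K a ≤ K c := by
    intro a c hac
    apply Submodule.span_mono
    rintro _ ⟨i, rfl⟩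
    exact ⟨⟨(i : ℕ), lt_of_lt_of_le i.2 hac⟩, rfl⟩
  have hpmem : ∀ j k : ℕ, j < k → p j ∈ P k := by
    intro j k hjk
    exact Submodule.subset_span ⟨⟨j, hjk⟩, rfl⟩
  have hKmem : ∀ i k : ℕ, i < k → (A ^ i).mulVec (r 0) ∈ K k := by
    intro i k hik
    exact Submodule.subset_span ⟨⟨i, hik⟩, rfl⟩
  -- residual identity r k = b - A x k
  have hres : ∀ k : ℕ, (∀ i < k, r i ≠ 0) → r k = b - A.mulVec (x k) := by
    intro k
    induction k with
    | zero => intro _; exact hr0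
    | succ m IH =>
      intro H
      have hrm : r m ≠ 0 := H m (by omega)
      have IH' := IH (fun i hi => H i (by omega))
      rw [hrrec m hrm, hxrec m hrm, IH', Matrix.mulVec_add, Matrix.mulVec_smul]
      abel
  -- r k - p k ∈ P k
  have hrP : ∀ k : ℕ, (∀ i < k, r i ≠ 0) → r k - p k ∈ P k := by
    intro k H
    match k with
    | 0 => simp [hp0]
    | Nat.succ l =>
      have hrl : r l ≠ 0 := H l (by omega)
      rw [hprec l hrl]
      have h : r (l+1) - (r (l+1) + ((r (l+1) ⬝ᵥ r (l+1)) / (r l ⬝ᵥ r l)) • p l)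
          = (-((r (l+1) ⬝ᵥ r (l+1)) / (r l ⬝ᵥ r l))) • p l := by module
      rw [h]
      exact (P (l+1)).smul_mem _ (hpmem l (l+1) (by omega))
  have hrmemP : ∀ k : ℕ, (∀ i < k, r i ≠ 0) → r k ∈ P (k+1) := by
    intro k H
    have h1 : r k = (r k - p k) + p k := by abel
    rw [h1]
    exact (P (k+1)).add_mem (hPle (by omega) (hrP k H)) (hpmem k (k+1) (by omega))
  -- the orthogonality invariants, by strong induction
  have horth : ∀ k : ℕ, (∀ i < k, r i ≠ 0) →
      (∀ i < k, r k ⬝ᵥ r i = 0) ∧ (∀ i < k, r k ⬝ᵥ p i = 0) ∧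
      (∀ i < k, p k ⬝ᵥ A.mulVec (p i) = 0) := by
    intro k
    induction k using Nat.strong_induction_on with
    | _ k IH =>
    intro H
    match k with
    | 0 => exact ⟨fun i hi => absurd hi (by omega), fun i hi => absurd hi (by omega),
        fun i hi => absurd hi (by omega)⟩
    | Nat.succ j =>
      have Hj : ∀ i < j, r i ≠ 0 := fun i hi => H i (by omega)
      have hrj : r j ≠ 0 := H j (by omega)
      obtain ⟨IHrr, IHrp, IHpp⟩ := IH j (by omega) Hj
      -- derived facts at levels ≤ j
      have hrkpk : ∀ m ≤ j, r m ⬝ᵥ p m = r m ⬝ᵥ r m := by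
        intro m hm
        match m with
        | 0 => rw [hp0]
        | Nat.succ l =>
          have hrl : r l ≠ 0 := H l (by omega)
          obtain ⟨_, rp, _⟩ := IH (l+1) (by omega) (fun i hi => H i (by omega))
          rw [hprec l hrl, dotProduct_add, dotProduct_smul, rp l (by omega)]
          simp
      have hppos : ∀ m ≤ j, 0 < p m ⬝ᵥ A.mulVec (p m) := by
        intro m hm
        have hrm : r m ≠ 0 := H m (by omega)
        have h1 : r m ⬝ᵥ p m ≠ 0 := by
          rw [hrkpk m hm]
          exact fun h => hrm (dotProduct_self_eq_zero.1 h)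
        have hpm : p m ≠ 0 := by
          intro h; apply h1; rw [h, dotProduct_zero]
        exact hpos _ hpm
      have hApj_orth : ∀ v ∈ P j, A.mulVec (p j) ⬝ᵥ v = 0 := by
        apply hdspan
        rintro _ ⟨i, rfl⟩
        rw [← hsym]
        exact IHpp i i.2
      have hriPj : ∀ i < j, r i ∈ P j := by
        intro i hij
        have := hrmemP i (fun l hl => H l (by omega))
        exact hPle (by omega) this
      -- new r-r orthogonality
      have newrr : ∀ i < j+1, r (j+1) ⬝ᵥ r i = 0 := by
        intro i hi
        rw [hrrec j hrj, sub_dotProduct, smul_dotProduct]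
        rcases Nat.lt_or_ge i j with hij | hij
        · have h1 : A.mulVec (p j) ⬝ᵥ r i = 0 := hApj_orth _ (hriPj i hij)
          rw [IHrr i hij, h1]; simp
        · have hij' : j = i := by omega
          have hij'' : i = j := hij'.symm
          subst hij'
          have h2 : A.mulVec (p j) ⬝ᵥ (r j - p j) = 0 := hApj_orth _ (hrP j Hj)
          have h4 : A.mulVec (p j) ⬝ᵥ p j = p j ⬝ᵥ A.mulVec (p j) := (hsym _ _).symm
          have h1 : A.mulVec (p j) ⬝ᵥ r j = p j ⬝ᵥ A.mulVec (p j) := by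
            rw [dotProduct_sub] at h2
            rw [h4] at h2
            linarith
          rw [h1]
          have ht : p j ⬝ᵥ A.mulVec (p j) ≠ 0 := ne_of_gt (hppos j le_rfl)
          rw [smul_eq_mul, div_mul_cancel₀ _ ht, sub_self]
      -- new r-p orthogonality
      have newrp : ∀ i < j+1, r (j+1) ⬝ᵥ p i = 0 := by
        intro i hi
        rw [hrrec j hrj, sub_dotProduct, smul_dotProduct]
        rcases Nat.lt_or_ge i j with hij | hij
        · have h1 : A.mulVec (p j) ⬝ᵥ p i = 0 := hApj_orth _ (hpmem i j hij)
          rw [IHrp i hij, h1]; simp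
        · have hij' : j = i := by omega
          have hij'' : i = j := hij'.symm
          subst hij'
          have h4 : A.mulVec (p j) ⬝ᵥ p j = p j ⬝ᵥ A.mulVec (p j) := (hsym _ _).symm
          rw [h4, hrkpk j le_rfl]
          have ht : p j ⬝ᵥ A.mulVec (p j) ≠ 0 := ne_of_gt (hppos j le_rfl)
          rw [smul_eq_mul, div_mul_cancel₀ _ ht, sub_self]
      -- new conjugacy
      have newpp : ∀ i < j+1, p (j+1) ⬝ᵥ A.mulVec (p i) = 0 := by
        intro i hi
        have hri : r i ≠ 0 := H i hi
        rw [hprec j hrj, add_dotProduct, smul_dotProduct]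
        rcases Nat.lt_or_ge i j with hij | hij
        · have h2 : p j ⬝ᵥ A.mulVec (p i) = 0 := IHpp i hij
          have hti : p i ⬝ᵥ A.mulVec (p i) ≠ 0 := ne_of_gt (hppos i (le_of_lt hij))
          have hρi : r i ⬝ᵥ r i ≠ 0 := fun h => hri (dotProduct_self_eq_zero.1 h)
          have hApi : ((r i ⬝ᵥ r i) / (p i ⬝ᵥ A.mulVec (p i))) • A.mulVec (p i)
              = r i - r (i+1) := by
            rw [hrrec i hri]; abel
          have h1 : (r i ⬝ᵥ r i) / (p i ⬝ᵥ A.mulVec (p i)) * (r (j+1) ⬝ᵥ A.mulVec (p i))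
              = 0 := by
            have := congrArg (fun w => r (j+1) ⬝ᵥ w) hApi
            simp only [dotProduct_smul, dotProduct_sub, smul_eq_mul] at this
            rw [this, newrr i (by omega), newrr (i+1) (by omega)]
            ring
          have h3 : r (j+1) ⬝ᵥ A.mulVec (p i) = 0 := by
            have hne : (r i ⬝ᵥ r i) / (p i ⬝ᵥ A.mulVec (p i)) ≠ 0 := div_ne_zero hρi hti
            exact (mul_eq_zero.1 h1).resolve_left hne
          rw [h3, h2]; simp
        · have hij' : j = i := by omega
          have hij'' : i = j := hij'.symm
          subst hij'
          have ht : p j ⬝ᵥ A.mulVec (p j) ≠ 0 := ne_of_gt (hppos j le_rfl)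
          have hρ : r j ⬝ᵥ r j ≠ 0 := fun h => hrj (dotProduct_self_eq_zero.1 h)
          have hApj : ((r j ⬝ᵥ r j) / (p j ⬝ᵥ A.mulVec (p j))) • A.mulVec (p j)
              = r j - r (j+1) := by
            rw [hrrec j hrj]; abel
          have h1 : (r j ⬝ᵥ r j) / (p j ⬝ᵥ A.mulVec (p j)) * (r (j+1) ⬝ᵥ A.mulVec (p j))
              = -(r (j+1) ⬝ᵥ r (j+1)) := by
            have := congrArg (fun w => r (j+1) ⬝ᵥ w) hApj
            simp only [dotProduct_smul, dotProduct_sub, smul_eq_mul] at this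
            rw [this, newrr j (by omega)]
            ring
          have h2 : r (j+1) ⬝ᵥ A.mulVec (p j)
              = -(r (j+1) ⬝ᵥ r (j+1)) * (p j ⬝ᵥ A.mulVec (p j)) / (r j ⬝ᵥ r j) := by
            field_simp at h1 ⊢
            linarith
          rw [h2]
          rw [smul_eq_mul]; ring
      exact ⟨newrr, newrp, newpp⟩
  -- global derived facts
  have hrkpkG : ∀ m : ℕ, (∀ i < m, r i ≠ 0) → r m ⬝ᵥ p m = r m ⬝ᵥ r m := by
    intro m H
    match m with
    | 0 => rw [hp0]
    | Nat.succ l =>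
      have hrl : r l ≠ 0 := H l (by omega)
      obtain ⟨_, rp, _⟩ := horth (l+1) H
      rw [hprec l hrl, dotProduct_add, dotProduct_smul, rp l (by omega)]
      simp
  have hpposG : ∀ m : ℕ, (∀ i < m, r i ≠ 0) → r m ≠ 0 → 0 < p m ⬝ᵥ A.mulVec (p m) := by
    intro m H hrm
    have h1 : r m ⬝ᵥ p m ≠ 0 := by
      rw [hrkpkG m H]
      exact fun h => hrm (dotProduct_self_eq_zero.1 h)
    have hpm : p m ≠ 0 := by
      intro h; apply h1; rw [h, dotProduct_zero]
    exact hpos _ hpm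
  -- Krylov generators lie in the span of the p's
  have hAP : ∀ k : ℕ, (∀ i < k, r i ≠ 0) → (A ^ k).mulVec (r 0) ∈ P (k+1) := by
    intro k
    induction k with
    | zero =>
      intro _
      simp only [pow_zero, Matrix.one_mulVec]
      exact hrmemP 0 (fun i hi => absurd hi (by omega))
    | succ m IH =>
      intro H
      have hm : (A ^ m).mulVec (r 0) ∈ P (m+1) := IH (fun i hi => H i (by omega))
      have hstep : (A ^ (m+1)).mulVec (r 0) = A.mulVec ((A ^ m).mulVec (r 0)) := by
        rw [pow_succ', ← Matrix.mulVec_mulVec]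
      rw [hstep]
      refine hmapspan _ (P (m+2)) ?_ _ hm
      rintro _ ⟨jj, rfl⟩
      have hjj : (jj : ℕ) < m + 1 := jj.2
      have hrjj : r (jj : ℕ) ≠ 0 := H _ (by omega)
      have Hjj : ∀ i < (jj : ℕ), r i ≠ 0 := fun i hi => H i (by omega)
      have ht : p (jj : ℕ) ⬝ᵥ A.mulVec (p (jj : ℕ)) ≠ 0 :=
        ne_of_gt (hpposG _ Hjj hrjj)
      have hρ : r (jj : ℕ) ⬝ᵥ r (jj : ℕ) ≠ 0 :=
        fun h => hrjj (dotProduct_self_eq_zero.1 h)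
      have hApjj : A.mulVec (p (jj : ℕ))
          = ((p (jj : ℕ) ⬝ᵥ A.mulVec (p (jj : ℕ))) / (r (jj : ℕ) ⬝ᵥ r (jj : ℕ)))
            • (r (jj : ℕ) - r ((jj : ℕ)+1)) := by
        rw [hrrec _ hrjj, sub_sub_cancel, smul_smul]
        have h1 : (p (jj : ℕ) ⬝ᵥ A.mulVec (p (jj : ℕ))) / (r (jj : ℕ) ⬝ᵥ r (jj : ℕ))
            * ((r (jj : ℕ) ⬝ᵥ r (jj : ℕ)) / (p (jj : ℕ) ⬝ᵥ A.mulVec (p (jj : ℕ)))) = 1 := by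
          field_simp
        rw [h1, one_smul]
      rw [hApjj]
      apply (P (m+2)).smul_mem
      apply (P (m+2)).sub_mem
      · exact hPle (by omega) (hrmemP _ Hjj)
      · exact hPle (by omega) (hrmemP _ (fun i hi => H i (by omega)))
  -- p's and r's lie in Krylov spaces
  have hpK : ∀ k : ℕ, (∀ i < k, r i ≠ 0) → r k ∈ K (k+1) ∧ p k ∈ K (k+1) := by
    intro k
    induction k with
    | zero =>
      intro _
      have h0 : r 0 ∈ K 1 := by
        apply Submodule.subset_span
        exact ⟨0, by simp [Matrix.one_mulVec]⟩
      exact ⟨h0, by rw [hp0]; exact h0⟩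
    | succ m IH =>
      intro H
      have hrm : r m ≠ 0 := H m (by omega)
      obtain ⟨hrK, hpKm⟩ := IH (fun i hi => H i (by omega))
      have hApm : A.mulVec (p m) ∈ K (m+2) := by
        refine hmapspan _ (K (m+2)) ?_ _ hpKm
        rintro _ ⟨i, rfl⟩
        have : A.mulVec ((A ^ (i : ℕ)).mulVec (r 0)) = (A ^ ((i : ℕ)+1)).mulVec (r 0) := by
          rw [pow_succ', ← Matrix.mulVec_mulVec]
        rw [this]
        exact hKmem _ _ (by omega)
      have hrnew : r (m+1) ∈ K (m+2) := by
        rw [hrrec m hrm]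
        exact (K (m+2)).sub_mem (hKle (by omega) hrK) ((K (m+2)).smul_mem _ hApm)
      refine ⟨hrnew, ?_⟩
      rw [hprec m hrm]
      exact (K (m+2)).add_mem hrnew ((K (m+2)).smul_mem _ (hKle (by omega) hpKm))
  have hxmem : ∀ k : ℕ, (∀ i < k, r i ≠ 0) → x k - x 0 ∈ K k := by
    intro k
    induction k with
    | zero => intro _; simp
    | succ m IH =>
      intro H
      have hrm : r m ≠ 0 := H m (by omega)
      have hxm := IH (fun i hi => H i (by omega))
      have hpm : p m ∈ K (m+1) := (hpK m (fun i hi => H i (by omega))).2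
      rw [hxrec m hrm]
      have h1 : x m + ((r m ⬝ᵥ r m) / (p m ⬝ᵥ A.mulVec (p m))) • p m - x 0
          = (x m - x 0) + ((r m ⬝ᵥ r m) / (p m ⬝ᵥ A.mulVec (p m))) • p m := by abel
      rw [h1]
      exact (K (m+1)).add_mem (hKle (by omega) hxm) ((K (m+1)).smul_mem _ hpm)
  -- main conclusion
  intro k hk H
  have hrKorth : ∀ v ∈ K k, r k ⬝ᵥ v = 0 := by
    apply hdspan
    rintro _ ⟨i, rfl⟩
    have hiAP : (A ^ (i : ℕ)).mulVec (r 0) ∈ P ((i : ℕ)+1) :=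
      hAP _ (fun l hl => H l (by omega))
    have hiAP' : (A ^ (i : ℕ)).mulVec (r 0) ∈ P k := hPle (by omega) hiAP
    refine hdspan _ _ ?_ _ hiAP'
    rintro _ ⟨jj, rfl⟩
    exact (horth k H).2.1 jj jj.2
  constructor
  · exact ⟨x k - x 0, hxmem k H, by abel⟩
  · intro s hs hne
    set d := x 0 + s - x k with hd
    have hdK : d ∈ K k := by
      have : d = s - (x k - x 0) := by rw [hd]; abel
      rw [this]
      exact (K k).sub_mem hs (hxmem k H)
    have hd0 : d ≠ 0 := sub_ne_zero.mpr hne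
    have hrd : r k ⬝ᵥ d = 0 := hrKorth d hdK
    have hy : x 0 + s = x k + d := by rw [hd]; abel
    have hreskk : r k = b - A.mulVec (x k) := hres k H
    have key : f (x k + d) = f (x k) + (1/2) * (d ⬝ᵥ A.mulVec d)
        + (d ⬝ᵥ A.mulVec (x k) - d ⬝ᵥ b) := by
      rw [hf, hf, Matrix.mulVec_add, add_dotProduct, dotProduct_add, dotProduct_add,
        add_dotProduct]
      have h1 : x k ⬝ᵥ A.mulVec d = d ⬝ᵥ A.mulVec (x k) := by
        rw [hsym, dotProduct_comm]
      rw [h1]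
      ring
    have hcross : d ⬝ᵥ A.mulVec (x k) - d ⬝ᵥ b = 0 := by
      have h2 : d ⬝ᵥ r k = d ⬝ᵥ b - d ⬝ᵥ A.mulVec (x k) := by
        rw [hreskk, dotProduct_sub]
      have h3 : d ⬝ᵥ r k = 0 := by rw [dotProduct_comm]; exact hrd
      linarith [h2, h3]
    have hdpos : 0 < d ⬝ᵥ A.mulVec d := hpos d hd0
    rw [hy, key]
    linarith
end
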